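/- arXiv:2106.07998 — 3 statements merged into one kernel-verified Lean document; each statement's English description precedes it below -/
import Mathlib

section
/- If A is Bernoulli(α) and C ∈ [0,1] with δ = E[C|A=1] − E[C|A=0], then the bias term (1/n)·V[C−A] equals (1/n)·(α(1−α)(1−2δ) + V[C]). -/
open MeasureTheory ProbabilityTheory

/-- If `A` is Bernoulli(α) and `C ∈ [0,1]` with `δ = E[C|A=1] − E[C|A=0]`, then the bias
term `(1/n)·V[C−A]` equals `(1/n)·(α(1−α)(1−2δ) + V[C])`. -/
theorem bias_term_eq {Ω : Type*} [MeasurableSpace Ω]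
    (μ : Measure Ω) [IsProbabilityMeasure μ]
    (C A : Ω → ℝ) (α δ : ℝ) (n : ℕ) (hn : 1 ≤ n)
    (hA01 : ∀ ω, A ω = 0 ∨ A ω = 1)
    (hAmeas : Measurable A) (hCmeas : Measurable C)
    (hCrange : ∀ ω, C ω ∈ Set.Icc (0 : ℝ) 1)
    (hC2 : MemLp C 2 μ)
    (hα : ∫ ω, A ω ∂μ = α) (hα0 : 0 < α) (hα1 : α < 1)
    (hδ : δ = (∫ ω in {ω | A ω = 1}, C ω ∂μ) / α
            - (∫ ω in {ω | A ω = 0}, C ω ∂μ) / (1 - α)) :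
    (1 / (n : ℝ)) * variance (fun ω => C ω - A ω) μ
      = (1 / (n : ℝ)) * (α * (1 - α) * (1 - 2 * δ) + variance C μ) := by
  have hA2 : MemLp A 2 μ := by
    refine (memLp_top_of_bound hAmeas.aestronglyMeasurable 1 ?_).mono_exponent le_top
    filter_upwards with ω
    rcases hA01 ω with h | h <;> simp [h]
  have hCA2 : MemLp (fun ω => C ω - A ω) 2 μ := hC2.sub hA2
  have hCint : Integrable C μ := hC2.integrable (by norm_num)
  have hAint : Integrable A μ := hA2.integrable (by norm_num)
  have hC2int : Integrable (fun ω => C ω ^ 2) μ := by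
    have := hC2.integrable_norm_rpow (by norm_num) (by norm_num)
    simpa [Real.rpow_natCast, ENNReal.toReal_ofNat, Real.rpow_two, sq_abs,
      Integrable] using (memLp_two_iff_integrable_sq hC2.aestronglyMeasurable).1 hC2
  have hA2int : Integrable (fun ω => A ω ^ 2) μ :=
    (memLp_two_iff_integrable_sq hA2.aestronglyMeasurable).1 hA2
  have hCAint : Integrable (fun ω => C ω * A ω) μ := by
    refine hAint.bdd_mul (c := 1) hCmeas.aestronglyMeasurable (Filter.Eventually.of_forall fun ω => ?_)
    have h := hCrange ω
    rw [Real.norm_eq_abs, abs_le]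
    constructor <;> linarith [h.1, h.2]
  -- set measurability
  have hs1 : MeasurableSet {ω | A ω = 1} := hAmeas (measurableSet_singleton 1)
  -- E[CA] = ∫_{A=1} C
  have hECA : ∫ ω, C ω * A ω ∂μ = ∫ ω in {ω | A ω = 1}, C ω ∂μ := by
    rw [← integral_indicator hs1]
    congr 1
    ext ω
    rcases hA01 ω with h | h <;>
      simp [Set.indicator_apply, h]
  -- E0 + E1 = E[C]
  have hcompl : {ω | A ω = 1}ᶜ = {ω | A ω = 0} := by
    ext ω
    rcases hA01 ω with h | h <;> simp [h]
  have hsplit : (∫ ω in {ω | A ω = 1}, C ω ∂μ) + (∫ ω in {ω | A ω = 0}, C ω ∂μ)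
      = ∫ ω, C ω ∂μ := by
    rw [← hcompl]
    exact integral_add_compl hs1 hCint
  -- A^2 = A
  have hAsq : ∀ ω, A ω ^ 2 = A ω := by
    intro ω; rcases hA01 ω with h | h <;> simp [h]
  have hEA2 : ∫ ω, A ω ^ 2 ∂μ = α := by
    rw [← hα]; exact integral_congr_ae (Filter.Eventually.of_forall hAsq)
  -- variance formulas
  have hVA : variance A μ = α - α ^ 2 := by
    rw [variance_eq_sub hA2, hα]
    simp only [Pi.pow_apply]
    rw [hEA2]
  have hVC : variance C μ = (∫ ω, C ω ^ 2 ∂μ) - (∫ ω, C ω ∂μ) ^ 2 := variance_eq_sub hC2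
  have hVCA : variance (fun ω => C ω - A ω) μ
      = (∫ ω, (C ω - A ω) ^ 2 ∂μ) - (∫ ω, (C ω - A ω) ∂μ) ^ 2 := variance_eq_sub hCA2
  have hint1 : ∫ ω, (C ω - A ω) ∂μ = (∫ ω, C ω ∂μ) - α := by
    rw [integral_sub hCint hAint, hα]
  have hint2 : ∫ ω, (C ω - A ω) ^ 2 ∂μ
      = (∫ ω, C ω ^ 2 ∂μ) - 2 * (∫ ω, C ω * A ω ∂μ) + α := by
    have : ∀ ω, (C ω - A ω) ^ 2 = C ω ^ 2 - 2 * (C ω * A ω) + A ω ^ 2 := by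
      intro ω; ring
    rw [integral_congr_ae (Filter.Eventually.of_forall this)]
    have h1 : ∫ ω, (C ω ^ 2 - 2 * (C ω * A ω)) + A ω ^ 2 ∂μ
        = (∫ ω, C ω ^ 2 - 2 * (C ω * A ω) ∂μ) + ∫ ω, A ω ^ 2 ∂μ :=
      integral_add (hC2int.sub (hCAint.const_mul 2)) hA2int
    have h2 : ∫ ω, C ω ^ 2 - 2 * (C ω * A ω) ∂μ
        = (∫ ω, C ω ^ 2 ∂μ) - ∫ ω, 2 * (C ω * A ω) ∂μ :=
      integral_sub hC2int (hCAint.const_mul 2)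
    rw [h1, h2, integral_const_mul, hEA2]
  -- put together
  set E1 := ∫ ω in {ω | A ω = 1}, C ω ∂μ
  set E0 := ∫ ω in {ω | A ω = 0}, C ω ∂μ
  have hne : α ≠ 0 := ne_of_gt hα0
  have hne1 : (1 : ℝ) - α ≠ 0 := by linarith
  have key : variance (fun ω => C ω - A ω) μ = α * (1 - α) * (1 - 2 * δ) + variance C μ := by
    rw [hVCA, hint1, hint2, hECA, hVC, hδ, ← hsplit]
    field_simp
    ring
  rw [key]
end

section
/- Let buckets B₁,…,B_m partition the sample space, with n_i samples in bucket i, n = Σ n_i, and suppose within each bucket the samples (C_j, A_j) are i.i.d. with bucket means γ_i = E[C | B_i], α_i = E[A | B_i]. Then conditioning on the bucket counts, E[Σᵢ (n_i/n)(C̄_i − Ā_i)²] = Σᵢ (n_i/n)(γ_i − α_i)² + (1/n)Σᵢ V[C − A | B_i], where C̄_i, Ā_i are within-bucket sample means. -/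
open MeasureTheory ProbabilityTheory


lemma measurePreserving_eval_pi' {ι : Type*} [Fintype ι] {α : ι → Type*}
    [∀ i, MeasurableSpace (α i)] (μ : ∀ i, Measure (α i)) [∀ i, IsProbabilityMeasure (μ i)]
    (i : ι) : MeasurePreserving (Function.eval i) (Measure.pi μ) (μ i) := by
  classical
  refine ⟨measurable_pi_apply i, ?_⟩
  ext s hs
  rw [Measure.map_apply (measurable_pi_apply i) hs, Set.eval_preimage, Measure.pi_pi,
    Finset.prod_eq_single i (fun j _ hj => by simp [Function.update_of_ne hj]) (by simp)]
  simp

lemma integral_eval_pi' {ι : Type*} [Fintype ι] {α : ι → Type*}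
    [∀ i, MeasurableSpace (α i)] (μ : ∀ i, Measure (α i)) [∀ i, IsProbabilityMeasure (μ i)]
    (i : ι) (g : α i → ℝ) (hg : AEStronglyMeasurable g (μ i)) :
    ∫ x : ∀ i, α i, g (x i) ∂Measure.pi μ = ∫ y, g y ∂μ i := by
  rw [← (measurePreserving_eval_pi' μ i).map_eq] at hg ⊢
  exact (integral_map (measurable_pi_apply i).aemeasurable hg).symm

lemma mean_sq_integral' {Ω : Type*} [MeasurableSpace Ω] (ν : Measure Ω) [IsProbabilityMeasure ν]
    (f : Ω → ℝ) (hf : MemLp f 2 ν) (N : ℕ) (hN : 0 < N) :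
    ∫ ω : Fin N → Ω, ((1 / (N : ℝ)) * ∑ j, f (ω j)) ^ 2 ∂(Measure.pi fun _ : Fin N => ν)
      = (∫ x, f x ∂ν) ^ 2 + variance f ν / N := by
  classical
  letI : MeasureSpace Ω := ⟨ν⟩
  have hvol : (Measure.pi fun _ : Fin N => ν) = (volume : Measure (Fin N → Ω)) := rfl
  set π : Measure (Fin N → Ω) := Measure.pi fun _ : Fin N => ν with hπ
  have hmp : ∀ j : Fin N, MeasurePreserving (Function.eval j) π ν := fun j =>
    measurePreserving_eval_pi' _ j
  have hfj : ∀ j : Fin N, MemLp (fun ω : Fin N → Ω => f (ω j)) 2 π := fun j =>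
    hf.comp_measurePreserving (hmp j)
  -- value of each cross-term integral
  set I1 : ℝ := ∫ x, f x ∂ν with hI1
  set I2 : ℝ := ∫ x, f x * f x ∂ν with hI2
  have hfint : Integrable f ν := hf.integrable one_le_two
  have hfsq : Integrable (fun x => f x * f x) ν := by
    simpa [sq] using hf.integrable_sq
  have hterm : ∀ j k : Fin N, Integrable (fun ω : Fin N → Ω => f (ω j) * f (ω k)) π ∧
      ∫ ω, f (ω j) * f (ω k) ∂π = if j = k then I2 else I1 * I1 := by
    intro j k
    by_cases hjk : j = k
    · subst hjk
      simp only [if_pos rfl]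
      constructor
      · have := (hfj j).integrable_sq
        simpa [sq] using this
      · exact integral_eval_pi' (fun _ : Fin N => ν) j (fun x => f x * f x) hfsq.1
    · -- product of two distinct coordinates
      set g : Fin N → Ω → ℝ := fun i x => (if i = j then f x else 1) * (if i = k then f x else 1)
        with hg
      have hgprod : ∀ ω : Fin N → Ω, ∏ i, g i (ω i) = f (ω j) * f (ω k) := by
        intro ω
        rw [hg]
        simp only [Finset.prod_mul_distrib]
        rw [Finset.prod_ite_eq' Finset.univ j (fun i => f (ω i)),
          Finset.prod_ite_eq' Finset.univ k (fun i => f (ω i))]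
        simp
      have hgint : ∀ i, Integrable (g i) ν := by
        intro i
        rw [hg]
        by_cases h1 : i = j <;> by_cases h2 : i = k <;>
          simp_all [hfint, integrable_const]
      have hint : Integrable (fun ω : Fin N → Ω => ∏ i, g i (ω i)) π :=
        Integrable.fintype_prod (f := g) hgint
      have hval : ∫ ω : Fin N → Ω, ∏ i, g i (ω i) ∂π = ∏ i, ∫ x, g i x ∂ν :=
        integral_fintype_prod_eq_prod g
      have hgi : ∀ i, ∫ x, g i x ∂ν = (if i = j then I1 else 1) * (if i = k then I1 else 1) := by
        intro i
        rw [hg]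
        by_cases h1 : i = j <;> by_cases h2 : i = k <;> simp_all
      constructor
      · exact hint.congr (Filter.Eventually.of_forall fun ω => hgprod ω)
      · rw [if_neg hjk]
        calc ∫ ω, f (ω j) * f (ω k) ∂π = ∫ ω : Fin N → Ω, ∏ i, g i (ω i) ∂π := by
              refine integral_congr_ae (Filter.Eventually.of_forall fun ω => (hgprod ω).symm)
          _ = ∏ i, ∫ x, g i x ∂ν := hval
          _ = I1 * I1 := by
              simp only [hgi]
              rw [Finset.prod_mul_distrib, Finset.prod_ite_eq' Finset.univ j fun _ => I1,
                Finset.prod_ite_eq' Finset.univ k fun _ => I1]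
              simp
  have expand : ∀ ω : Fin N → Ω, ((1 / (N : ℝ)) * ∑ j, f (ω j)) ^ 2
      = (1 / (N : ℝ)) ^ 2 * ∑ j, ∑ k, f (ω j) * f (ω k) := by
    intro ω
    rw [mul_pow, sq (∑ j, f (ω j)), Finset.sum_mul_sum]
  have hmain : ∫ ω : Fin N → Ω, ((1 / (N : ℝ)) * ∑ j, f (ω j)) ^ 2 ∂π
      = (1 / (N : ℝ)) ^ 2 * ∑ j : Fin N, ∑ k : Fin N, if j = k then I2 else I1 * I1 := by
    simp_rw [expand]
    rw [integral_const_mul]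
    congr 1
    rw [integral_finset_sum _ fun j _ => integrable_finset_sum _ fun k _ => (hterm j k).1]
    refine Finset.sum_congr rfl fun j _ => ?_
    rw [integral_finset_sum _ fun k _ => (hterm j k).1]
    exact Finset.sum_congr rfl fun k _ => (hterm j k).2
  rw [hmain]
  have hsum : ∑ j : Fin N, ∑ k : Fin N, (if j = k then I2 else I1 * I1)
      = N * (N * (I1 * I1) + (I2 - I1 * I1)) := by
    have : ∀ j : Fin N, ∑ k : Fin N, (if j = k then I2 else I1 * I1)
        = N * (I1 * I1) + (I2 - I1 * I1) := by
      intro j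
      have : ∀ k : Fin N, (if j = k then I2 else I1 * I1)
          = I1 * I1 + if j = k then I2 - I1 * I1 else 0 := by
        intro k; by_cases h : j = k <;> simp [h]
      simp_rw [this]
      rw [Finset.sum_add_distrib, Finset.sum_const, Finset.sum_ite_eq Finset.univ j fun _ => I2 - I1 * I1]
      simp [mul_comm]
    simp_rw [this]
    rw [Finset.sum_const]
    simp only [Finset.card_univ, Fintype.card_fin, nsmul_eq_mul]
  rw [hsum]
  have hvar : variance f ν = I2 - I1 * I1 := by
    rw [variance_eq_sub hf, hI1, hI2]
    simp [sq]
  rw [hvar]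
  have hN' : (N : ℝ) ≠ 0 := Nat.cast_ne_zero.mpr hN.ne'
  field_simp

/-- With `m` fixed buckets, bucket `i` containing `nn i` i.i.d. samples from `μ i` with
bucket means `γ i = E[C | B_i]`, `α i = E[A | B_i]`, and `n = ∑ nn i`, conditioning on the
bucket counts: `E[∑ᵢ (nᵢ/n)(C̄ᵢ − Āᵢ)²] = ∑ᵢ (nᵢ/n)(γᵢ − αᵢ)² + (1/n)∑ᵢ V[C − A | B_i]`. -/
theorem binned_sq_ece_expectation {Ω : Type*} [MeasurableSpace Ω]
    (m : ℕ) (μ : Fin m → Measure Ω) [∀ i, IsProbabilityMeasure (μ i)]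
    (C A : Ω → ℝ) (nn : Fin m → ℕ) (n : ℕ)
    (hpos : ∀ i, 0 < nn i) (hn : n = ∑ i, nn i)
    (hC2 : ∀ i, MemLp C 2 (μ i)) (hA2 : ∀ i, MemLp A 2 (μ i))
    (γ α : Fin m → ℝ)
    (hγ : ∀ i, γ i = ∫ ω, C ω ∂(μ i)) (hα : ∀ i, α i = ∫ ω, A ω ∂(μ i)) :
    ∫ ω : Π i : Fin m, Fin (nn i) → Ω,
        ∑ i, ((nn i : ℝ) / n) *
          ((1 / (nn i : ℝ)) * ∑ j, C (ω i j) - (1 / (nn i : ℝ)) * ∑ j, A (ω i j)) ^ 2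
        ∂(Measure.pi fun i => Measure.pi fun _ : Fin (nn i) => μ i)
      = ∑ i, ((nn i : ℝ) / n) * (γ i - α i) ^ 2
        + (1 / (n : ℝ)) * ∑ i, variance (fun ω => C ω - A ω) (μ i) := by
  classical
  rcases Nat.eq_zero_or_pos m with hm | hm
  · subst hm
    simp
  have hn0 : 0 < n := by
    rw [hn]
    have : Nonempty (Fin m) := ⟨⟨0, hm⟩⟩
    exact Finset.sum_pos (fun i _ => hpos i) Finset.univ_nonempty
  have hnR : (n : ℝ) ≠ 0 := Nat.cast_ne_zero.mpr hn0.ne'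
  set f : Ω → ℝ := fun ω => C ω - A ω with hfdef
  have hf2 : ∀ i, MemLp f 2 (μ i) := fun i => (hC2 i).sub (hA2 i)
  set G : ∀ i : Fin m, (Fin (nn i) → Ω) → ℝ :=
    fun i x => ((1 / (nn i : ℝ)) * ∑ j, f (x j)) ^ 2 with hGdef
  -- rewrite integrand
  have hrw : ∀ (ω : Π i : Fin m, Fin (nn i) → Ω) (i : Fin m),
      ((1 / (nn i : ℝ)) * ∑ j, C (ω i j) - (1 / (nn i : ℝ)) * ∑ j, A (ω i j)) ^ 2
        = G i (ω i) := by
    intro ω i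
    rw [hGdef, ← mul_sub, ← Finset.sum_sub_distrib]
  -- integrability of G i over its bucket product measure
  have hGmean : ∀ i, MemLp (fun x : Fin (nn i) → Ω => (1 / (nn i : ℝ)) * ∑ j, f (x j)) 2
      (Measure.pi fun _ : Fin (nn i) => μ i) := by
    intro i
    refine MemLp.const_mul ?_ _
    have h := memLp_finset_sum' (μ := Measure.pi fun _ : Fin (nn i) => μ i) Finset.univ
      (f := fun j : Fin (nn i) => f ∘ Function.eval j) fun j _ =>
      (hf2 i).comp_measurePreserving (measurePreserving_eval_pi' (fun _ : Fin (nn i) => μ i) j)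
    refine h.ae_eq (Filter.Eventually.of_forall fun x => ?_)
    simp [Function.comp]
  have hGint : ∀ i, Integrable (G i) (Measure.pi fun _ : Fin (nn i) => μ i) := by
    intro i
    have := (hGmean i).integrable_sq
    simpa [hGdef, sq] using this
  -- integrability of the composed terms on the big product space
  have hGcomp : ∀ i, Integrable (fun ω : Π i : Fin m, Fin (nn i) → Ω => G i (ω i))
      (Measure.pi fun i => Measure.pi fun _ : Fin (nn i) => μ i) := by
    intro i
    have := (memLp_one_iff_integrable.mpr (hGint i)).comp_measurePreserving
      (measurePreserving_eval_pi' (fun i => Measure.pi fun _ : Fin (nn i) => μ i) i)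
    exact memLp_one_iff_integrable.mp this
  calc
    ∫ ω : Π i : Fin m, Fin (nn i) → Ω,
        ∑ i, ((nn i : ℝ) / n) *
          ((1 / (nn i : ℝ)) * ∑ j, C (ω i j) - (1 / (nn i : ℝ)) * ∑ j, A (ω i j)) ^ 2
        ∂(Measure.pi fun i => Measure.pi fun _ : Fin (nn i) => μ i)
      = ∫ ω : Π i : Fin m, Fin (nn i) → Ω, ∑ i, ((nn i : ℝ) / n) * G i (ω i)
          ∂(Measure.pi fun i => Measure.pi fun _ : Fin (nn i) => μ i) := by
        refine integral_congr_ae (Filter.Eventually.of_forall fun ω => ?_)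
        exact Finset.sum_congr rfl fun i _ => by rw [hrw ω i]
    _ = ∑ i, ((nn i : ℝ) / n) * ∫ x, G i x ∂(Measure.pi fun _ : Fin (nn i) => μ i) := by
        rw [integral_finset_sum _ fun i _ => (hGcomp i).const_mul _]
        refine Finset.sum_congr rfl fun i _ => ?_
        rw [integral_const_mul,
          integral_eval_pi' (fun i => Measure.pi fun _ : Fin (nn i) => μ i) i (G i)
            (hGint i).1]
    _ = ∑ i, ((nn i : ℝ) / n) * ((γ i - α i) ^ 2 + variance f (μ i) / nn i) := by
        refine Finset.sum_congr rfl fun i _ => ?_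
        rw [mean_sq_integral' (μ i) f (hf2 i) (nn i) (hpos i)]
        congr 2
        rw [hfdef]
        rw [integral_sub ((hC2 i).integrable one_le_two) ((hA2 i).integrable one_le_two),
          hγ i, hα i]
    _ = ∑ i, ((nn i : ℝ) / n) * (γ i - α i) ^ 2
        + (1 / (n : ℝ)) * ∑ i, variance f (μ i) := by
        rw [Finset.mul_sum, ← Finset.sum_add_distrib]
        refine Finset.sum_congr rfl fun i _ => ?_
        have hni : (nn i : ℝ) ≠ 0 := Nat.cast_ne_zero.mpr (hpos i).ne'
        field_simp
end

section
/- Suppose a model's predictions are perfectly calibrated, i.e., for every bucket B_i, E[C | B_i] = E[A | B_i]. Then the expected value of the binned squared ECE estimator equals (1/n)Σᵢ V[C − A | B_i] ≥ 0, with equality only if C − A is almost surely constant in every bucket; thus the estimator is positively biased for calibrated models. -/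
open MeasureTheory ProbabilityTheory

lemma my_pi_map_eval {ι : Type*} [Fintype ι] [DecidableEq ι] {α : ι → Type*}
    [∀ i, MeasurableSpace (α i)]
    (μ : ∀ i, Measure (α i)) [∀ i, IsProbabilityMeasure (μ i)] (i : ι) :
    (Measure.pi μ).map (Function.eval i) = μ i := by
  ext s hs
  rw [Measure.map_apply (measurable_pi_apply i) hs]
  have h1 : Function.eval i ⁻¹' s
      = Set.pi Set.univ (Function.update (fun _ => Set.univ) i s) := by
    ext x
    simp only [Set.mem_preimage, Set.mem_univ_pi, Function.eval]
    constructor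
    · intro hx j
      rcases eq_or_ne j i with rfl | hj
      · simpa using hx
      · simp [Function.update_of_ne hj]
    · intro hx
      simpa using hx i
  rw [h1, Measure.pi_pi]
  rw [Finset.prod_eq_single i]
  · simp
  · intro j _ hj; simp [Function.update_of_ne hj]
  · simp

lemma my_block {Ω : Type*} [MeasurableSpace Ω] (ν : Measure Ω) [IsProbabilityMeasure ν]
    (k : ℕ) (hk : 0 < k) (f : Ω → ℝ) (hf2 : MemLp f 2 ν) (hbd : ∀ ω, |f ω| ≤ 1)
    (hmean : ∫ ω, f ω ∂ν = 0) :
    ∫ x : Fin k → Ω, ((1 / (k : ℝ)) * ∑ j, f (x j)) ^ 2 ∂(Measure.pi fun _ : Fin k => ν)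
      = variance f ν / k := by
  letI : MeasureSpace Ω := ⟨ν⟩
  haveI : IsProbabilityMeasure (volume : Measure Ω) := ‹_›
  set νk : Measure (Fin k → Ω) := Measure.pi fun _ : Fin k => ν with hνk
  have hAESM : ∀ j : Fin k, AEStronglyMeasurable (fun x : Fin k → Ω => f (x j)) νk := by
    intro j
    have h1 : AEStronglyMeasurable f (νk.map (Function.eval j)) := by
      rw [my_pi_map_eval]; exact hf2.1
    exact h1.comp_measurable (measurable_pi_apply j)
  have hint : ∀ j l : Fin k, Integrable (fun x => f (x j) * f (x l)) νk := by
    intro j l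
    refine memLp_one_iff_integrable.mp (MemLp.of_bound ((hAESM j).mul (hAESM l)) 1 ?_)
    refine ae_of_all _ fun x => ?_
    rw [Real.norm_eq_abs, abs_mul]
    exact mul_le_one₀ (hbd _) (abs_nonneg _) (hbd _)
  have expand : ∀ x : Fin k → Ω, ((1 / (k : ℝ)) * ∑ j, f (x j)) ^ 2
      = (1 / (k : ℝ)) ^ 2 * ∑ j, ∑ l, f (x j) * f (x l) := by
    intro x
    rw [mul_pow, pow_two (∑ j, f (x j)), Finset.sum_mul_sum]
  have key : ∀ j l : Fin k, ∫ x, f (x j) * f (x l) ∂νk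
      = if j = l then ∫ ω, f ω ^ 2 ∂ν else 0 := by
    intro j l
    have hprod : ∀ x : Fin k → Ω, f (x j) * f (x l)
        = ∏ t, ((if t = j then f (x t) else 1) * (if t = l then f (x t) else 1)) := by
      intro x
      rw [Finset.prod_mul_distrib, Finset.prod_ite_eq', Finset.prod_ite_eq']
      simp
    have hfub : ∫ x : Fin k → Ω, ∏ t, ((fun t : Fin k => fun ω : Ω =>
            (if t = j then f ω else 1) * (if t = l then f ω else 1)) t (x t)) ∂νk
        = ∏ t, ∫ ω, ((if t = j then f ω else 1) * (if t = l then f ω else 1)) ∂ν :=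
      integral_fintype_prod_eq_prod
        (fun t : Fin k => fun ω : Ω => (if t = j then f ω else 1) * (if t = l then f ω else 1))
    calc ∫ x, f (x j) * f (x l) ∂νk
        = ∫ x : Fin k → Ω, ∏ t, ((fun t : Fin k => fun ω : Ω =>
            (if t = j then f ω else 1) * (if t = l then f ω else 1)) t (x t)) ∂νk :=
          integral_congr_ae (ae_of_all _ fun x => hprod x)
      _ = ∏ t, ∫ ω, ((if t = j then f ω else 1) * (if t = l then f ω else 1)) ∂ν := hfub
      _ = if j = l then ∫ ω, f ω ^ 2 ∂ν else 0 := by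
          rcases eq_or_ne j l with rfl | hjl
          · simp only [if_pos rfl]
            rw [Finset.prod_eq_single j]
            · simp [pow_two]
            · intro t _ ht; simp [ht]
            · simp
          · rw [if_neg hjl]
            refine Finset.prod_eq_zero (Finset.mem_univ j) ?_
            simp [hjl, hmean]
  have hk' : (k : ℝ) ≠ 0 := Nat.cast_ne_zero.mpr hk.ne'
  calc ∫ x : Fin k → Ω, ((1 / (k : ℝ)) * ∑ j, f (x j)) ^ 2 ∂νk
      = ∫ x, (1 / (k : ℝ)) ^ 2 * ∑ j, ∑ l, f (x j) * f (x l) ∂νk :=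
        integral_congr_ae (ae_of_all _ fun x => expand x)
    _ = (1 / (k : ℝ)) ^ 2 * ∫ x, ∑ j, ∑ l, f (x j) * f (x l) ∂νk := integral_const_mul _ _
    _ = (1 / (k : ℝ)) ^ 2 * ∑ j, ∑ l, ∫ x, f (x j) * f (x l) ∂νk := by
        rw [integral_finset_sum _ fun j _ => integrable_finset_sum _ fun l _ => hint j l]
        congr 1
        exact Finset.sum_congr rfl fun j _ => integral_finset_sum _ fun l _ => hint j l
    _ = (1 / (k : ℝ)) ^ 2 * ∑ j : Fin k, ∫ ω, f ω ^ 2 ∂ν := by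
        congr 1
        refine Finset.sum_congr rfl fun j _ => ?_
        simp [key j]
    _ = variance f ν / k := by
        rw [Finset.sum_const, Finset.card_univ, Fintype.card_fin, nsmul_eq_mul,
          variance_eq_sub hf2, hmean]
        have h2 : ν[f ^ 2] = ∫ ω, f ω ^ 2 ∂ν := rfl
        rw [h2]
        field_simp
        ring

/-- If the model is perfectly calibrated (`E[C | B_i] = E[A | B_i]` in every bucket), the
expectation of the binned squared ECE estimator equals `(1/n)∑ᵢ V[C − A | B_i] ≥ 0`, with
equality only if `C − A` is almost surely constant in every bucket; thus the estimator is
positively biased for calibrated models. -/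
theorem binned_sq_ece_bias_calibrated {Ω : Type*} [MeasurableSpace Ω]
    (m : ℕ) (μ : Fin m → Measure Ω) [∀ i, IsProbabilityMeasure (μ i)]
    (C A : Ω → ℝ) (nn : Fin m → ℕ) (n : ℕ)
    (hpos : ∀ i, 0 < nn i) (hn : n = ∑ i, nn i)
    (hC2 : ∀ i, MemLp C 2 (μ i)) (hA2 : ∀ i, MemLp A 2 (μ i))
    (hCrange : ∀ ω, C ω ∈ Set.Icc (0 : ℝ) 1)
    (hA01 : ∀ ω, A ω = 0 ∨ A ω = 1)
    (hcal : ∀ i, ∫ ω, C ω ∂(μ i) = ∫ ω, A ω ∂(μ i)) :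
    (∫ ω : Π i : Fin m, Fin (nn i) → Ω,
        ∑ i, ((nn i : ℝ) / n) *
          ((1 / (nn i : ℝ)) * ∑ j, C (ω i j) - (1 / (nn i : ℝ)) * ∑ j, A (ω i j)) ^ 2
        ∂(Measure.pi fun i => Measure.pi fun _ : Fin (nn i) => μ i))
      = (1 / (n : ℝ)) * ∑ i, variance (fun ω => C ω - A ω) (μ i) ∧
    0 ≤ (1 / (n : ℝ)) * ∑ i, variance (fun ω => C ω - A ω) (μ i) ∧
    ((1 / (n : ℝ)) * (∑ i, variance (fun ω => C ω - A ω) (μ i)) = 0 →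
      ∀ i, ∃ c : ℝ, (fun ω => C ω - A ω) =ᵐ[μ i] fun _ => c) := by
  classical
  set D : Ω → ℝ := fun ω => C ω - A ω with hDdef
  have hD2 : ∀ i, MemLp D 2 (μ i) := fun i => (hC2 i).sub (hA2 i)
  have hDbd : ∀ ω, |D ω| ≤ 1 := by
    intro ω
    have h1 := (hCrange ω).1
    have h2 := (hCrange ω).2
    have hDe : D ω = C ω - A ω := rfl
    rcases hA01 ω with h | h <;> rw [abs_le, hDe, h] <;> constructor <;> linarith
  have hDmean : ∀ i, ∫ ω, D ω ∂(μ i) = 0 := by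
    intro i
    have : ∫ ω, D ω ∂(μ i) = (∫ ω, C ω ∂(μ i)) - ∫ ω, A ω ∂(μ i) :=
      integral_sub ((hC2 i).integrable one_le_two) ((hA2 i).integrable one_le_two)
    rw [this, hcal i, sub_self]
  set P : Measure (Π i : Fin m, Fin (nn i) → Ω) :=
    Measure.pi fun i => Measure.pi fun _ : Fin (nn i) => μ i with hPdef
  set ν : ∀ i : Fin m, Measure (Fin (nn i) → Ω) :=
    fun i => Measure.pi fun _ : Fin (nn i) => μ i with hνdef
  have hmapP : ∀ (i : Fin m) (j : Fin (nn i)),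
      P.map (fun ω : Π i : Fin m, Fin (nn i) → Ω => ω i j) = μ i := by
    intro i j
    have he : (fun ω : Π i : Fin m, Fin (nn i) → Ω => ω i j)
        = Function.eval j ∘ (Function.eval i :
            (Π i : Fin m, Fin (nn i) → Ω) → (Fin (nn i) → Ω)) := rfl
    rw [he, ← Measure.map_map (measurable_pi_apply j) (measurable_pi_apply i)]
    rw [my_pi_map_eval (fun i => Measure.pi fun _ : Fin (nn i) => μ i) i]
    exact my_pi_map_eval (fun _ : Fin (nn i) => μ i) j
  have hAESMP : ∀ (i : Fin m) (j : Fin (nn i)),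
      AEStronglyMeasurable (fun ω : Π i : Fin m, Fin (nn i) → Ω => D (ω i j)) P := by
    intro i j
    have h1 : AEStronglyMeasurable D
        (P.map (fun ω : Π i : Fin m, Fin (nn i) → Ω => ω i j)) := by
      rw [hmapP i j]; exact (hD2 i).1
    exact h1.comp_measurable ((measurable_pi_apply j).comp (measurable_pi_apply i))
  have hterm_aesm : ∀ i : Fin m, AEStronglyMeasurable
      (fun ω : Π i : Fin m, Fin (nn i) → Ω =>
        ((nn i : ℝ) / n) * ((1 / (nn i : ℝ)) * ∑ j, D (ω i j)) ^ 2) P := by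
    intro i
    have hs : AEStronglyMeasurable
        (fun ω : Π i : Fin m, Fin (nn i) → Ω => ∑ j, D (ω i j)) P :=
      Finset.aestronglyMeasurable_fun_sum _ fun j _ => hAESMP i j
    exact ((hs.const_mul (1 / (nn i : ℝ))).pow 2).const_mul ((nn i : ℝ) / n)
  have hbound : ∀ (i : Fin m) (ω : Π i : Fin m, Fin (nn i) → Ω),
      ‖((nn i : ℝ) / n) * ((1 / (nn i : ℝ)) * ∑ j, D (ω i j)) ^ 2‖ ≤ (nn i : ℝ) / n := by
    intro i ω
    have hki : (0 : ℝ) < nn i := by exact_mod_cast hpos i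
    have h1 : |∑ j, D (ω i j)| ≤ (nn i : ℝ) := by
      calc |∑ j, D (ω i j)| ≤ ∑ j, |D (ω i j)| := Finset.abs_sum_le_sum_abs _ _
        _ ≤ ∑ _j : Fin (nn i), (1 : ℝ) := Finset.sum_le_sum fun j _ => hDbd _
        _ = (nn i : ℝ) := by simp
    have habs : |(1 / (nn i : ℝ)) * ∑ j, D (ω i j)| ≤ 1 := by
      rw [abs_mul, abs_of_nonneg (by positivity : (0:ℝ) ≤ 1 / (nn i : ℝ))]
      calc (1 / (nn i : ℝ)) * |∑ j, D (ω i j)| ≤ (1 / (nn i : ℝ)) * (nn i : ℝ) :=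
            mul_le_mul_of_nonneg_left h1 (by positivity)
        _ = 1 := by field_simp
    have hsq : ((1 / (nn i : ℝ)) * ∑ j, D (ω i j)) ^ 2 ≤ 1 := by
      have := abs_le.mp habs
      nlinarith [this.1, this.2]
    have hc : (0 : ℝ) ≤ (nn i : ℝ) / n := by positivity
    rw [Real.norm_eq_abs, abs_mul, abs_of_nonneg hc, abs_of_nonneg (sq_nonneg _)]
    exact mul_le_of_le_one_right hc hsq
  have hint : ∀ i : Fin m, Integrable
      (fun ω : Π i : Fin m, Fin (nn i) → Ω =>
        ((nn i : ℝ) / n) * ((1 / (nn i : ℝ)) * ∑ j, D (ω i j)) ^ 2) P :=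
    fun i => memLp_one_iff_integrable.mp
      (MemLp.of_bound (hterm_aesm i) _ (ae_of_all _ (hbound i)))
  have hFaesm : ∀ i : Fin m, AEStronglyMeasurable
      (fun y : Fin (nn i) → Ω => ((1 / (nn i : ℝ)) * ∑ j, D (y j)) ^ 2) (ν i) := by
    intro i
    have hc : ∀ j : Fin (nn i),
        AEStronglyMeasurable (fun y : Fin (nn i) → Ω => D (y j)) (ν i) := by
      intro j
      have h1 : AEStronglyMeasurable D ((ν i).map (Function.eval j)) := by
        rw [hνdef]
        rw [my_pi_map_eval (fun _ : Fin (nn i) => μ i) j]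
        exact (hD2 i).1
      exact h1.comp_measurable (measurable_pi_apply j)
    have hs : AEStronglyMeasurable (fun y : Fin (nn i) → Ω => ∑ j, D (y j)) (ν i) :=
      Finset.aestronglyMeasurable_fun_sum _ fun j _ => hc j
    exact (hs.const_mul (1 / (nn i : ℝ))).pow 2
  -- the main computation
  have hmain : (∫ ω : Π i : Fin m, Fin (nn i) → Ω,
        ∑ i, ((nn i : ℝ) / n) *
          ((1 / (nn i : ℝ)) * ∑ j, C (ω i j) - (1 / (nn i : ℝ)) * ∑ j, A (ω i j)) ^ 2 ∂P)
      = (1 / (n : ℝ)) * ∑ i, variance D (μ i) := by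
    have hptw : ∀ (ω : Π i : Fin m, Fin (nn i) → Ω) (i : Fin m),
        (1 / (nn i : ℝ)) * ∑ j, C (ω i j) - (1 / (nn i : ℝ)) * ∑ j, A (ω i j)
          = (1 / (nn i : ℝ)) * ∑ j, D (ω i j) := by
      intro ω i
      rw [← mul_sub, ← Finset.sum_sub_distrib]
    calc (∫ ω : Π i : Fin m, Fin (nn i) → Ω,
          ∑ i, ((nn i : ℝ) / n) *
            ((1 / (nn i : ℝ)) * ∑ j, C (ω i j) - (1 / (nn i : ℝ)) * ∑ j, A (ω i j)) ^ 2 ∂P)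
        = ∫ ω : Π i : Fin m, Fin (nn i) → Ω,
            ∑ i, ((nn i : ℝ) / n) * ((1 / (nn i : ℝ)) * ∑ j, D (ω i j)) ^ 2 ∂P := by
          refine integral_congr_ae (ae_of_all _ fun ω => ?_)
          exact Finset.sum_congr rfl fun i _ => by rw [hptw ω i]
      _ = ∑ i, ∫ ω : Π i : Fin m, Fin (nn i) → Ω,
            ((nn i : ℝ) / n) * ((1 / (nn i : ℝ)) * ∑ j, D (ω i j)) ^ 2 ∂P :=
          integral_finset_sum _ fun i _ => hint i
      _ = ∑ i, ((nn i : ℝ) / n) * (variance D (μ i) / nn i) := by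
          refine Finset.sum_congr rfl fun i _ => ?_
          rw [integral_const_mul]
          congr 1
          have hmap : ∫ y, ((1 / (nn i : ℝ)) * ∑ j, D (y j)) ^ 2 ∂(ν i)
              = ∫ ω : Π i : Fin m, Fin (nn i) → Ω,
                  ((1 / (nn i : ℝ)) * ∑ j, D (ω i j)) ^ 2 ∂P := by
            have h1 : (ν i) = P.map (Function.eval i) := by
              rw [hPdef, hνdef]
              exact (my_pi_map_eval (fun i => Measure.pi fun _ : Fin (nn i) => μ i) i).symm
            rw [h1]
            refine integral_map (measurable_pi_apply i).aemeasurable ?_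
            rw [← h1]; exact hFaesm i
          rw [← hmap, hνdef]
          exact my_block (μ i) (nn i) (hpos i) D (hD2 i) hDbd (hDmean i)
      _ = (1 / (n : ℝ)) * ∑ i, variance D (μ i) := by
          rw [Finset.mul_sum]
          refine Finset.sum_congr rfl fun i _ => ?_
          have hki : (nn i : ℝ) ≠ 0 := Nat.cast_ne_zero.mpr (hpos i).ne'
          rw [div_mul_div_comm, mul_comm (nn i : ℝ) (variance D (μ i)),
            mul_div_mul_right _ _ hki, ← one_div_mul_eq_div]
  refine ⟨hmain, ?_, ?_⟩
  · exact mul_nonneg (by positivity)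
      (Finset.sum_nonneg fun i _ => variance_nonneg _ _)
  · intro h0 i
    have hnpos : 0 < n := by
      rw [hn]
      exact Finset.sum_pos (fun j _ => hpos j) ⟨i, Finset.mem_univ i⟩
    have hnne : (1 / (n : ℝ)) ≠ 0 := by
      have : (0:ℝ) < n := by exact_mod_cast hnpos
      positivity
    have hsum0 : ∑ i, variance D (μ i) = 0 := by
      rcases mul_eq_zero.mp h0 with h | h
      · exact absurd h hnne
      · exact h
    have heach : variance D (μ i) = 0 :=
      (Finset.sum_eq_zero_iff_of_nonneg fun j _ => variance_nonneg _ _).mp hsum0 i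
        (Finset.mem_univ i)
    have hev : evariance D (μ i) = 0 := by
      have hlt := (hD2 i).evariance_lt_top
      have ht : (evariance D (μ i)).toReal = 0 := heach
      rcases (ENNReal.toReal_eq_zero_iff _).mp ht with h | h
      · exact h
      · exact absurd h hlt.ne
    exact ⟨∫ ω, D ω ∂(μ i), (evariance_eq_zero_iff (hD2 i).1.aemeasurable).mp hev⟩
end
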